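/- Sampling probability asymptotics for a rare allele in a large sample with fixed selection (equation (8) of the paper): fix θ₁, θ₂ > 0, β ∈ ℝ and a natural number n₁. For each natural number n₂, set n = n₁ + n₂ and define q(n₁,n₂;β) := C(n,n₁) · I(n₁,n₂,β) / I(0,0,β), where C(n,n₁) is the binomial coefficient and I(m₁,m₂,β) := ∫₀¹ x^{θ₁+m₁-1}(1-x)^{θ₂+m₂-1} e^{βx} dx. Then lim_{n₂ → ∞} n₂^{θ₁} · q(n₁,n₂;β) = Γ(θ₁+n₁) / (n₁! · I(0,0,β)). -/

import Mathlib

open Real Filter Topology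

open MeasureTheory

lemma beta_intble_left {p : ℝ} (hp : 0 < p) (q : ℝ) :
    IntervalIntegrable (fun x : ℝ => x ^ (p - 1) * (1 - x) ^ (q - 1)) volume 0 (1 / 2) := by
  apply IntervalIntegrable.mul_continuousOn
  · exact intervalIntegral.intervalIntegrable_rpow' (by linarith)
  · apply ContinuousOn.rpow_const
    · exact (continuous_const.sub continuous_id).continuousOn
    · intro x hx
      rw [Set.uIcc_of_le (by norm_num : (0:ℝ) ≤ 1 / 2)] at hx
      left
      have : x ≤ 1 / 2 := hx.2
      intro h
      have : (1:ℝ) - x > 0 := by linarith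
      linarith [h ▸ this]

lemma beta_intble {p q : ℝ} (hp : 0 < p) (hq : 0 < q) :
    IntervalIntegrable (fun x : ℝ => x ^ (p - 1) * (1 - x) ^ (q - 1)) volume 0 1 := by
  refine (beta_intble_left hp q).trans ?_
  have h := ((beta_intble_left hq p).comp_sub_left 1).symm
  norm_num at h
  have heq : (fun x : ℝ => x ^ (p - 1) * (1 - x) ^ (q - 1))
      = fun x : ℝ => (1 - x) ^ (q - 1) * x ^ (p - 1) := by
    funext x; rw [mul_comm]
  rw [heq]
  exact h

lemma beta_eq {p q : ℝ} (hp : 0 < p) (hq : 0 < q) :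
    ∫ x in (0:ℝ)..1, x ^ (p - 1) * (1 - x) ^ (q - 1)
      = Real.Gamma p * Real.Gamma q / Real.Gamma (p + q) := by
  have h := Complex.Gamma_mul_Gamma_eq_betaIntegral (s := p) (t := q) (by simpa) (by simpa)
  have hc : Complex.betaIntegral p q
      = ((∫ x in (0:ℝ)..1, x ^ (p - 1) * (1 - x) ^ (q - 1) : ℝ) : ℂ) := by
    rw [Complex.betaIntegral, ← intervalIntegral.integral_ofReal]
    apply intervalIntegral.integral_congr
    intro x hx
    rw [Set.uIcc_of_le (by norm_num : (0:ℝ) ≤ 1)] at hx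
    push_cast [Complex.ofReal_cpow hx.1, Complex.ofReal_cpow (sub_nonneg.2 hx.2)]
    ring
  rw [hc, ← Complex.ofReal_add, Complex.Gamma_ofReal, Complex.Gamma_ofReal,
    Complex.Gamma_ofReal, ← Complex.ofReal_mul, ← Complex.ofReal_mul] at h
  have h2 := Complex.ofReal_inj.mp h
  rw [eq_div_iff (Real.Gamma_pos_of_pos (by linarith)).ne']
  rw [h2]; ring

lemma Gamma_add_nat {b : ℝ} (hb : 0 < b) (n : ℕ) :
    Real.Gamma (b + n) = Real.Gamma b * ∏ j ∈ Finset.range n, (b + j) := by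
  induction n with
  | zero => simp
  | succ n ih =>
      have h1 : b + ((n : ℕ) + 1 : ℕ) = (b + n) + 1 := by push_cast; ring
      have h2 : b + (n : ℝ) ≠ 0 := by positivity
      rw [h1, Real.Gamma_add_one h2, ih, Finset.prod_range_succ]; ring

lemma gamma_ratio {a b : ℝ} (ha : 0 < a) (hb : 0 < b) :
    Tendsto (fun n : ℕ => (n : ℝ) ^ a * Real.Gamma (b + n) / Real.Gamma (a + b + n))
      atTop (𝓝 1) := by
  have hGb := Real.Gamma_pos_of_pos hb
  have hGab := Real.Gamma_pos_of_pos (by linarith : (0:ℝ) < a + b)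
  have h3 : Tendsto (fun n : ℕ => (a + b + (n:ℝ)) / (b + n)) atTop (𝓝 1) := by
    have hb0 : Tendsto (fun n : ℕ => a / (b + (n:ℝ))) atTop (𝓝 0) := by
      apply Tendsto.div_atTop tendsto_const_nhds
      exact tendsto_atTop_add_const_left _ b tendsto_natCast_atTop_atTop
    have := hb0.const_add 1
    rw [add_zero] at this
    refine this.congr fun n => ?_
    have : b + (n:ℝ) ≠ 0 := by positivity
    field_simp; ring
  have h1 := Real.GammaSeq_tendsto_Gamma (a + b)
  have h2 := Real.GammaSeq_tendsto_Gamma b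
  have hmain := ((tendsto_const_nhds (x := Real.Gamma b / Real.Gamma (a + b))).mul
    (h1.div h2 hGb.ne')).mul h3
  have hval : Real.Gamma b / Real.Gamma (a + b) * (Real.Gamma (a + b) / Real.Gamma b) * 1
      = 1 := by field_simp
  rw [hval] at hmain
  refine hmain.congr' ?_
  filter_upwards [eventually_ge_atTop 1] with n hn
  have hn0 : (0:ℝ) < (n:ℝ) := by exact_mod_cast hn
  have hP : (0:ℝ) < ∏ j ∈ Finset.range n, (b + j) := by
    apply Finset.prod_pos; intro j _; positivity
  have hQ : (0:ℝ) < ∏ j ∈ Finset.range n, (a + b + j) := by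
    apply Finset.prod_pos; intro j _; positivity
  have hbn : (0:ℝ) < b + n := by positivity
  have habn : (0:ℝ) < a + b + n := by positivity
  have hfac : (0:ℝ) < (n.factorial : ℝ) := by exact_mod_cast n.factorial_pos
  have hna : (0:ℝ) < (n:ℝ) ^ a := Real.rpow_pos_of_pos hn0 a
  have hnb : (0:ℝ) < (n:ℝ) ^ b := Real.rpow_pos_of_pos hn0 b
  simp only [Pi.div_apply]
  rw [Real.GammaSeq, Real.GammaSeq, Gamma_add_nat hb, Gamma_add_nat (by linarith : (0:ℝ) < a + b),
    Finset.prod_range_succ, Finset.prod_range_succ, Real.rpow_add hn0]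
  field_simp

lemma key {a θ₂ : ℝ} (ha : 0 < a) (hθ₂ : 0 < θ₂) :
    Tendsto (fun n : ℕ => (n : ℝ) ^ a * ∫ x in (0:ℝ)..1, x ^ (a - 1) * (1 - x) ^ (θ₂ + n - 1))
      atTop (𝓝 (Real.Gamma a)) := by
  have h := (gamma_ratio ha hθ₂).const_mul (Real.Gamma a)
  rw [mul_one] at h
  refine h.congr fun n => ?_
  have hq : (0:ℝ) < θ₂ + n := by positivity
  rw [beta_eq ha hq]
  rw [show a + (θ₂ + (n:ℝ)) = a + θ₂ + n by ring]
  ring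

lemma abs_exp_sub_one_le' (y : ℝ) : |Real.exp y - 1| ≤ |y| * Real.exp |y| := by
  rcases le_or_gt 0 y with h | h
  · rw [abs_of_nonneg h, abs_of_nonneg (by nlinarith [Real.add_one_le_exp y] : (0:ℝ) ≤ Real.exp y - 1)]
    have h1 := Real.add_one_le_exp (-y)
    have h2 : Real.exp (-y) * Real.exp y = 1 := by rw [← Real.exp_add]; simp
    nlinarith [Real.exp_pos y]
  · rw [abs_of_neg h, abs_of_nonpos (by nlinarith [Real.exp_lt_one_iff.mpr h] : Real.exp y - 1 ≤ 0)]
    have h1 := Real.add_one_le_exp y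
    have h2 : (1:ℝ) ≤ Real.exp (-y) := Real.one_le_exp (by linarith)
    nlinarith

set_option maxHeartbeats 1000000 in
lemma err {a θ₂ : ℝ} (β : ℝ) (ha : 0 < a) (hθ₂ : 0 < θ₂) :
    Tendsto (fun n : ℕ => (n : ℝ) ^ a *
      ((∫ x in (0:ℝ)..1, x ^ (a - 1) * (1 - x) ^ (θ₂ + n - 1) * Real.exp (β * x))
        - ∫ x in (0:ℝ)..1, x ^ (a - 1) * (1 - x) ^ (θ₂ + n - 1))) atTop (𝓝 0) := by
  set M := |β| * Real.exp |β| with hMdef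
  have hM : 0 ≤ M := by positivity
  have hexp : Continuous fun x : ℝ => Real.exp (β * x) :=
    Real.continuous_exp.comp (continuous_const.mul continuous_id)
  have hbound : ∀ n : ℕ, ‖(n : ℝ) ^ a *
      ((∫ x in (0:ℝ)..1, x ^ (a - 1) * (1 - x) ^ (θ₂ + n - 1) * Real.exp (β * x))
        - ∫ x in (0:ℝ)..1, x ^ (a - 1) * (1 - x) ^ (θ₂ + n - 1))‖
      ≤ (n : ℝ) ^ a * (M * (Real.Gamma (a + 1) * Real.Gamma (θ₂ + n)
          / Real.Gamma (a + 1 + (θ₂ + n)))) := by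
    intro n
    have hq : (0:ℝ) < θ₂ + n := by positivity
    have intble1 : IntervalIntegrable
        (fun x : ℝ => x ^ (a - 1) * (1 - x) ^ (θ₂ + n - 1)) volume 0 1 := beta_intble ha hq
    have intble2 : IntervalIntegrable
        (fun x : ℝ => x ^ (a - 1) * (1 - x) ^ (θ₂ + n - 1) * Real.exp (β * x)) volume 0 1 :=
      intble1.mul_continuousOn hexp.continuousOn
    have intbleB : IntervalIntegrable
        (fun x : ℝ => M * (x ^ (a + 1 - 1) * (1 - x) ^ (θ₂ + n - 1))) volume 0 1 :=
      (beta_intble (by linarith : (0:ℝ) < a + 1) hq).const_mul M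
    rw [norm_mul, Real.norm_rpow_of_nonneg n.cast_nonneg, Real.norm_natCast,
      ← intervalIntegral.integral_sub intble2 intble1]
    have hstep : ‖∫ x in (0:ℝ)..1, (x ^ (a - 1) * (1 - x) ^ (θ₂ + n - 1) * Real.exp (β * x)
        - x ^ (a - 1) * (1 - x) ^ (θ₂ + n - 1))‖
        ≤ ∫ x in (0:ℝ)..1, M * (x ^ (a + 1 - 1) * (1 - x) ^ (θ₂ + n - 1)) := by
      refine (intervalIntegral.norm_integral_le_integral_norm (by norm_num : (0:ℝ) ≤ 1)).trans ?_
      apply intervalIntegral.integral_mono_on (by norm_num : (0:ℝ) ≤ 1)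
        (intble2.sub intble1).norm intbleB
      intro x hx
      obtain ⟨hx0, hx1⟩ := hx
      have h1x : (0:ℝ) ≤ 1 - x := by linarith
      have hfnn : (0:ℝ) ≤ x ^ (a - 1) * (1 - x) ^ (θ₂ + n - 1) :=
        mul_nonneg (Real.rpow_nonneg hx0 _) (Real.rpow_nonneg h1x _)
      have key1 : |Real.exp (β * x) - 1| ≤ M * x := by
        refine (abs_exp_sub_one_le' (β * x)).trans ?_
        have h2 : |β * x| = |β| * x := by rw [abs_mul, abs_of_nonneg hx0]
        rw [h2, hMdef]
        have h3 : Real.exp (|β| * x) ≤ Real.exp |β| := by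
          apply Real.exp_le_exp.2; nlinarith [abs_nonneg β]
        nlinarith [mul_le_mul_of_nonneg_left h3 (mul_nonneg (abs_nonneg β) hx0)]
      have hxa : x ^ (a - 1) * x = x ^ (a + 1 - 1) := by
        rcases eq_or_ne x 0 with rfl | hx0'
        · rw [Real.zero_rpow (by linarith : a + 1 - 1 ≠ 0), mul_zero]
        · rw [← Real.rpow_add_one hx0' (a - 1)]; ring_nf
      calc ‖x ^ (a - 1) * (1 - x) ^ (θ₂ + n - 1) * Real.exp (β * x)
            - x ^ (a - 1) * (1 - x) ^ (θ₂ + n - 1)‖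
          = x ^ (a - 1) * (1 - x) ^ (θ₂ + n - 1) * |Real.exp (β * x) - 1| := by
            rw [Real.norm_eq_abs, show x ^ (a - 1) * (1 - x) ^ (θ₂ + n - 1) * Real.exp (β * x)
              - x ^ (a - 1) * (1 - x) ^ (θ₂ + n - 1)
              = x ^ (a - 1) * (1 - x) ^ (θ₂ + n - 1) * (Real.exp (β * x) - 1) by ring,
              abs_mul, abs_of_nonneg hfnn]
        _ ≤ x ^ (a - 1) * (1 - x) ^ (θ₂ + n - 1) * (M * x) := by
            exact mul_le_mul_of_nonneg_left key1 hfnn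
        _ = M * (x ^ (a + 1 - 1) * (1 - x) ^ (θ₂ + n - 1)) := by
            rw [← hxa]; ring
    refine le_trans (mul_le_mul_of_nonneg_left hstep (Real.rpow_nonneg n.cast_nonneg a)) ?_
    rw [intervalIntegral.integral_const_mul, beta_eq (by linarith : (0:ℝ) < a + 1) hq]
  apply squeeze_zero_norm hbound
  have h1 := gamma_ratio (by linarith : (0:ℝ) < a + 1) hθ₂
  have h2 : Tendsto (fun n : ℕ => ((n : ℝ))⁻¹) atTop (𝓝 0) :=
    tendsto_natCast_atTop_atTop.inv_tendsto_atTop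
  have h3 := (h1.mul h2).const_mul (M * Real.Gamma (a + 1))
  rw [one_mul, mul_zero] at h3
  refine h3.congr' ?_
  filter_upwards [eventually_ge_atTop 1] with n hn
  have hn0 : (0:ℝ) < (n:ℝ) := by exact_mod_cast hn
  have hG : (0:ℝ) < Real.Gamma (a + 1 + θ₂ + n) := Real.Gamma_pos_of_pos (by positivity)
  rw [show a + 1 + (θ₂ + (n:ℝ)) = a + 1 + θ₂ + n by ring,
    Real.rpow_add hn0 a 1, Real.rpow_one]
  field_simp

lemma key_exp {a θ₂ : ℝ} (β : ℝ) (ha : 0 < a) (hθ₂ : 0 < θ₂) :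
    Tendsto (fun n : ℕ => (n : ℝ) ^ a *
      ∫ x in (0:ℝ)..1, x ^ (a - 1) * (1 - x) ^ (θ₂ + n - 1) * Real.exp (β * x))
      atTop (𝓝 (Real.Gamma a)) := by
  have h := (key ha hθ₂).add (err β ha hθ₂)
  rw [add_zero] at h
  refine h.congr fun n => ?_
  ring

lemma choose_lim (n₁ : ℕ) :
    Tendsto (fun n : ℕ => (Nat.choose (n₁ + n) n₁ : ℝ) / (n : ℝ) ^ (n₁ : ℝ))
      atTop (𝓝 (1 / (n₁.factorial : ℝ))) := by
  have hfac : ∀ i ∈ Finset.range n₁,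
      Tendsto (fun n : ℕ => (((n₁ + n - i : ℕ) : ℝ)) / (n : ℝ)) atTop (𝓝 1) := by
    intro i hi
    have hi' : i ≤ n₁ := (Finset.mem_range.1 hi).le
    have h0 : Tendsto (fun n : ℕ => ((n₁ : ℝ) - i) / (n : ℝ)) atTop (𝓝 0) :=
      Tendsto.div_atTop tendsto_const_nhds tendsto_natCast_atTop_atTop
    have h1 := h0.const_add 1
    rw [add_zero] at h1
    refine h1.congr' ?_
    filter_upwards [eventually_ge_atTop 1] with n hn
    have hn0 : (0:ℝ) < (n:ℝ) := by exact_mod_cast hn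
    have hcast : ((n₁ + n - i : ℕ) : ℝ) = (n₁ : ℝ) + n - i := by
      rw [Nat.cast_sub (by omega : i ≤ n₁ + n)]; push_cast; ring
    rw [hcast]
    field_simp
    ring
  have hprod := tendsto_finset_prod (Finset.range n₁) hfac
  rw [Finset.prod_const_one] at hprod
  have h2 := hprod.div_const (n₁.factorial : ℝ)
  refine h2.congr' ?_
  filter_upwards [eventually_ge_atTop 1] with n hn
  have hn0 : (0:ℝ) < (n:ℝ) := by exact_mod_cast hn
  have hdesc : ((n₁ + n).descFactorial n₁ : ℝ) = (n₁.factorial : ℝ) * (Nat.choose (n₁ + n) n₁ : ℝ) := by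
    exact_mod_cast congrArg (Nat.cast (R := ℝ)) (Nat.descFactorial_eq_factorial_mul_choose (n₁ + n) n₁)
  have hprodeq : ∏ i ∈ Finset.range n₁, (((n₁ + n - i : ℕ) : ℝ)) / (n : ℝ)
      = ((n₁ + n).descFactorial n₁ : ℝ) / (n : ℝ) ^ (n₁ : ℝ) := by
    rw [Finset.prod_div_distrib, Nat.descFactorial_eq_prod_range]
    rw [Real.rpow_natCast, Finset.prod_const, Finset.card_range]
    push_cast
    ring
  rw [hprodeq, hdesc]
  have hfac0 : (n₁.factorial : ℝ) ≠ 0 := by exact_mod_cast n₁.factorial_ne_zero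
  have hrp : (n : ℝ) ^ (n₁ : ℝ) ≠ 0 := (Real.rpow_pos_of_pos hn0 _).ne'
  field_simp

/-- Sampling probability asymptotics for a rare allele in a large sample with fixed
selection (eq. (8)): with
`q(n₁,n₂;β) = C(n₁+n₂,n₁)·I(n₁,n₂,β)/I(0,0,β)` where
`I(m₁,m₂,β) = ∫₀¹ x^{θ₁+m₁-1}(1-x)^{θ₂+m₂-1}e^{βx} dx`,
one has `lim_{n₂→∞} n₂^{θ₁} q(n₁,n₂;β) = Γ(θ₁+n₁)/(n₁!·I(0,0,β))`. -/
theorem sampling_prob_large_sample (θ₁ θ₂ β : ℝ) (hθ₁ : 0 < θ₁) (hθ₂ : 0 < θ₂)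
    (n₁ : ℕ) :
    Filter.Tendsto (fun n₂ : ℕ =>
        (n₂ : ℝ) ^ θ₁ * ((Nat.choose (n₁ + n₂) n₁ : ℝ) *
          (∫ x in (0:ℝ)..1,
            x ^ (θ₁ + n₁ - 1) * (1 - x) ^ (θ₂ + n₂ - 1) * Real.exp (β * x)) /
          (∫ x in (0:ℝ)..1, x ^ (θ₁ - 1) * (1 - x) ^ (θ₂ - 1) * Real.exp (β * x))))
      Filter.atTop
      (𝓝 (Real.Gamma (θ₁ + n₁) / ((Nat.factorial n₁ : ℝ) *
        ∫ x in (0:ℝ)..1, x ^ (θ₁ - 1) * (1 - x) ^ (θ₂ - 1) * Real.exp (β * x)))) := by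
  have ha : (0:ℝ) < θ₁ + n₁ := by positivity
  have hnum := (choose_lim n₁).mul (key_exp (a := θ₁ + n₁) β ha hθ₂)
  have hnum' : Tendsto (fun n : ℕ => (n : ℝ) ^ θ₁ * ((Nat.choose (n₁ + n) n₁ : ℝ) *
      ∫ x in (0:ℝ)..1, x ^ (θ₁ + n₁ - 1) * (1 - x) ^ (θ₂ + n - 1) * Real.exp (β * x)))
      atTop (𝓝 (Real.Gamma (θ₁ + n₁) / (n₁.factorial : ℝ))) := by
    rw [show Real.Gamma (θ₁ + n₁) / (n₁.factorial : ℝ)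
      = 1 / (n₁.factorial : ℝ) * Real.Gamma (θ₁ + n₁) by ring]
    refine hnum.congr' ?_
    filter_upwards [eventually_ge_atTop 1] with n hn
    have hn0 : (0:ℝ) < (n:ℝ) := by exact_mod_cast hn
    have hrp : (n : ℝ) ^ ((n₁ : ℕ) : ℝ) ≠ 0 := (Real.rpow_pos_of_pos hn0 _).ne'
    rw [Real.rpow_add hn0]
    field_simp
    ring_nf
    simp only [mul_comm]
  have hfin := hnum'.div_const
    (∫ x in (0:ℝ)..1, x ^ (θ₁ - 1) * (1 - x) ^ (θ₂ - 1) * Real.exp (β * x))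
  rw [div_div] at hfin
  exact hfin.congr fun n => mul_div_assoc _ _ _
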